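/- If P(z) is a polynomial of degree n, then for all complex α, β with |α| ≤ 1, |β| ≤ 1, all R ≥ 1, and all z with |z| ≥ 1: |P(Rz) − αP(z) + β(((R+1)/2)ⁿ − |α|)P(z)| ≤ |Rⁿ − α + β(((R+1)/2)ⁿ − |α|)| · |z|ⁿ · max_{|w|=1} |P(w)|. -/

import Mathlib

/-- The maximum of `|P(w)|` over the unit circle `|w| = 1`. -/
noncomputable def maxMod (P : Polynomial ℂ) : ℝ :=
  sSup ((fun w => ‖P.eval w‖) '' {w : ℂ | ‖w‖ = 1})

lemma sphere_eq : {w : ℂ | ‖w‖ = 1} = Metric.sphere (0:ℂ) 1 := by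
  ext w; simp

lemma le_maxMod (P : Polynomial ℂ) (w : ℂ) (hw : ‖w‖ = 1) :
    ‖P.eval w‖ ≤ maxMod P := by
  apply le_csSup
  · rw [sphere_eq]
    exact ((isCompact_sphere (0:ℂ) 1).image
      (continuous_norm.comp (Polynomial.continuous P))).bddAbove
  · exact ⟨w, hw, rfl⟩

lemma rev_sphere (P : Polynomial ℂ) (u : ℂ) (hu : ‖u‖ = 1) :
    ‖P.reverse.eval u‖ ≤ maxMod P := by
  have hu0 : u ≠ 0 := by intro h; simp [h] at hu
  have hinv : u⁻¹ ≠ 0 := inv_ne_zero hu0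
  haveI := invertibleOfNonzero hinv
  have h := Polynomial.eval₂_reverse_mul_pow (RingHom.id ℂ) (u⁻¹) P
  rw [invOf_eq_inv _, inv_inv] at h
  have habs : ‖u⁻¹‖ = 1 := by rw [norm_inv, hu]; norm_num
  have := le_maxMod P u⁻¹ habs
  have h : P.reverse.eval u * (u⁻¹)^P.natDegree = P.eval u⁻¹ := h
  calc ‖P.reverse.eval u‖
      = ‖P.reverse.eval u * (u⁻¹)^P.natDegree‖ := by
        rw [norm_mul, norm_pow, habs]; simp
    _ = ‖P.eval u⁻¹‖ := by rw [h]
    _ ≤ maxMod P := this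

lemma rev_disk (P : Polynomial ℂ) (u : ℂ) (hu : ‖u‖ ≤ 1) :
    ‖P.reverse.eval u‖ ≤ maxMod P := by
  have h1 : (1:ℝ) ≠ 0 := one_ne_zero
  have := Complex.norm_le_of_forall_mem_frontier_norm_le (f := fun w => P.reverse.eval w)
    (U := Metric.ball (0:ℂ) 1) Metric.isBounded_ball
    ((Polynomial.differentiable P.reverse).diffContOnCl)
    (C := maxMod P) ?_ (z := u) ?_
  · simpa using this
  · intro w hw
    rw [frontier_ball _ h1, mem_sphere_zero_iff_norm] at hw
    simpa using rev_sphere P w (by simpa using hw)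
  · rw [closure_ball _ h1, Metric.mem_closedBall]
    simpa [Complex.dist_eq] using hu

lemma growth (P : Polynomial ℂ) (w : ℂ) (hw : 1 ≤ ‖w‖) :
    ‖P.eval w‖ ≤ ‖w‖ ^ P.natDegree * maxMod P := by
  have hw0 : w ≠ 0 := by intro h; simp [h] at hw; linarith
  haveI := invertibleOfNonzero hw0
  have h := Polynomial.eval₂_reverse_mul_pow (RingHom.id ℂ) w P
  rw [invOf_eq_inv _] at h
  have h : P.reverse.eval w⁻¹ * w ^ P.natDegree = P.eval w := h
  have hinv : ‖w⁻¹‖ ≤ 1 := by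
    rw [norm_inv]
    exact inv_le_one_of_one_le₀ hw
  calc ‖P.eval w‖ = ‖P.reverse.eval w⁻¹‖ * ‖w‖ ^ P.natDegree := by
        rw [← h, norm_mul, norm_pow]
    _ ≤ maxMod P * ‖w‖ ^ P.natDegree := by
        apply mul_le_mul_of_nonneg_right (rev_disk P _ hinv) (by positivity)
    _ = _ := mul_comm _ _

lemma leadingCoeff_le (P : Polynomial ℂ) : ‖P.leadingCoeff‖ ≤ maxMod P := by
  have := rev_disk P 0 (by simp)
  rwa [← Polynomial.coeff_zero_eq_eval_zero, Polynomial.coeff_zero_reverse] at this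

lemma maxMod_pos (P : Polynomial ℂ) (hP : P ≠ 0) : 0 < maxMod P := by
  by_contra h
  push_neg at h
  apply hP
  apply Polynomial.eq_zero_of_infinite_isRoot
  apply Set.infinite_of_injective_forall_mem (f := fun k : ℕ => ((k:ℝ) + 1 : ℂ))
  · intro a b hab
    simp only [Complex.ofReal_inj] at hab
    have : ((a:ℝ)+1 : ℂ) = ((b:ℝ)+1 : ℂ) := hab
    field_simp at this
    exact_mod_cast (add_right_cancel this)
  · intro k
    have hk : 1 ≤ ‖((k:ℝ) + 1 : ℂ)‖ := by
      have : ((k:ℝ) + 1 : ℂ) = (((k:ℝ)+1 : ℝ) : ℂ) := by push_cast; ring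
      rw [this, Complex.norm_real, Real.norm_eq_abs, abs_of_nonneg (by positivity)]
      simp
    have := growth P _ hk
    have h2 : ‖P.eval ((k:ℝ)+1:ℂ)‖ ≤ 0 := by
      have : ‖((k:ℝ)+1:ℂ)‖ ^ P.natDegree * maxMod P ≤ 0 :=
        mul_nonpos_of_nonneg_of_nonpos (by positivity) h
      linarith
    have h3 : ‖P.eval ((k:ℝ)+1:ℂ)‖ = 0 := le_antisymm h2 (by positivity)
    simpa [Polynomial.IsRoot] using (norm_eq_zero.mp h3)

lemma factor_bound (R : ℝ) (hR : 1 ≤ R) (z r : ℂ) (hz : 1 ≤ ‖z‖)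
    (hr : ‖r‖ ≤ 1) :
    (R + 1) / 2 * ‖z - r‖ ≤ ‖(R:ℂ) * z - r‖ := by
  have hab : |(z * (starRingEnd ℂ) r).re| ≤ ‖z‖ * ‖r‖ := by
    calc |(z * (starRingEnd ℂ) r).re| ≤ ‖z * (starRingEnd ℂ) r‖ :=
          Complex.abs_re_le_norm _
      _ = ‖z‖ * ‖r‖ := by rw [norm_mul, Complex.norm_conj]
  set a := ‖z‖ with ha
  set b := ‖r‖ with hb
  set t := (z * (starRingEnd ℂ) r).re with htdef
  have h1 : ‖z - r‖ ^ 2 = a^2 + b^2 - 2*t := by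
    rw [Complex.sq_norm, Complex.normSq_sub]
    simp [Complex.sq_norm, ha, hb, htdef]
  have h2 : ‖(R:ℂ)*z - r‖ ^ 2 = R^2*a^2 + b^2 - 2*R*t := by
    rw [Complex.sq_norm, Complex.normSq_sub]
    have e1 : ((R:ℂ)*z * (starRingEnd ℂ) r).re = R * t := by
      rw [mul_assoc]
      simp [Complex.mul_re, htdef]
    have e2 : Complex.normSq ((R:ℂ)*z) = R^2 * a^2 := by
      rw [← Complex.sq_norm, norm_mul, Complex.norm_real, Real.norm_eq_abs, mul_pow, sq_abs]
    rw [e1, e2, ← Complex.sq_norm]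
    ring
  have ht : -(a*b) ≤ t := by cases abs_le.mp hab; linarith
  have ha0 : 0 ≤ a := norm_nonneg z
  have hb0 : 0 ≤ b := norm_nonneg r
  have hba : b ≤ a := hr.trans hz
  have hint1 : 0 ≤ (t + a*b) * (R-1)^2 := mul_nonneg (by linarith) (sq_nonneg _)
  have hint2 : 0 ≤ ((R-1)*(a-b)) * (R*a + b + (R+1)/2*(a+b)) :=
    mul_nonneg (mul_nonneg (by linarith) (by linarith)) (by nlinarith)
  have key : ((R+1)/2 * ‖z - r‖)^2 ≤ ‖(R:ℂ)*z - r‖^2 := by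
    rw [mul_pow, h1, h2]
    nlinarith [hint1, hint2]
  exact le_of_pow_le_pow_left₀ two_ne_zero (norm_nonneg _) key

lemma prod_bound (R : ℝ) (hR : 1 ≤ R) (z : ℂ) (hz : 1 ≤ ‖z‖) :
    ∀ (m : Multiset ℂ), (∀ r ∈ m, ‖r‖ ≤ 1) →
    ((R+1)/2) ^ (Multiset.card m) * (m.map (fun r => ‖z - r‖)).prod
      ≤ (m.map (fun r => ‖(R:ℂ)*z - r‖)).prod := by
  intro m
  induction m using Multiset.induction_on with
  | empty => simp
  | cons r m ih =>
    intro hmem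
    simp only [Multiset.map_cons, Multiset.prod_cons, Multiset.card_cons]
    have h1 := factor_bound R hR z r hz (hmem r (Multiset.mem_cons_self r m))
    have h2 := ih (fun x hx => hmem x (Multiset.mem_cons_of_mem hx))
    have hnn : (0:ℝ) ≤ ((R+1)/2) ^ Multiset.card m
        * (Multiset.map (fun r => ‖z - r‖) m).prod := by
      apply mul_nonneg (by positivity)
      apply Multiset.prod_nonneg
      intro x hx
      obtain ⟨y, _, rfl⟩ := Multiset.mem_map.mp hx
      exact norm_nonneg _
    calc ((R+1)/2) ^ (Multiset.card m + 1)
          * (‖z - r‖ * (Multiset.map (fun r => ‖z - r‖) m).prod)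
        = ((R+1)/2 * ‖z - r‖) *
          (((R+1)/2) ^ Multiset.card m * (Multiset.map (fun r => ‖z - r‖) m).prod) := by
          ring
      _ ≤ ‖(R:ℂ)*z - r‖ *
          (Multiset.map (fun r => ‖(R:ℂ)*z - r‖) m).prod := by
          apply mul_le_mul h1 h2 hnn (norm_nonneg _)

lemma abs_eval_prod (F : Polynomial ℂ) (w : ℂ) (hF : F ≠ 0) :
    ‖F.eval w‖
      = ‖F.leadingCoeff‖ * ((F.roots.map (fun r => ‖w - r‖)).prod) := by
  conv_lhs => rw [(IsAlgClosed.splits F).eq_prod_roots]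
  rw [Polynomial.eval_mul, Polynomial.eval_C, norm_mul, Polynomial.eval_multiset_prod,
    Multiset.map_map]
  have hmp : ∀ m : Multiset ℂ, ‖m.prod‖ = (m.map norm).prod :=
    fun m => map_multiset_prod (normHom : ℂ →*₀ ℝ) m
  rw [hmp, Multiset.map_map]
  congr 1
  congr 1
  ext r
  simp

lemma eval_growth (F : Polynomial ℂ) (hF : F ≠ 0)
    (hroots : ∀ r ∈ F.roots, ‖r‖ ≤ 1)
    (R : ℝ) (hR : 1 ≤ R) (z : ℂ) (hz : 1 ≤ ‖z‖) :
    ((R+1)/2) ^ F.natDegree * ‖F.eval z‖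
      ≤ ‖F.eval ((R:ℂ)*z)‖ := by
  have hcard : Multiset.card F.roots = F.natDegree := by
    have := (IsAlgClosed.splits F).natDegree_eq_card_roots
    simpa [Polynomial.map_id] using this.symm
  rw [abs_eval_prod F z hF, abs_eval_prod F ((R:ℂ)*z) hF, ← hcard]
  have hb := prod_bound R hR z hz F.roots hroots
  calc ((R+1)/2) ^ Multiset.card F.roots *
        (‖F.leadingCoeff‖ * (Multiset.map (fun r => ‖z - r‖) F.roots).prod)
      = ‖F.leadingCoeff‖ *
        (((R+1)/2) ^ Multiset.card F.roots * (Multiset.map (fun r => ‖z - r‖) F.roots).prod) := by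
        ring
    _ ≤ ‖F.leadingCoeff‖ *
        (Multiset.map (fun r => ‖(R:ℂ)*z - r‖) F.roots).prod :=
        mul_le_mul_of_nonneg_left hb (norm_nonneg _)

theorem core (P : Polynomial ℂ) (n : ℕ) (hn : 1 ≤ n) (hdeg : P.natDegree = n)
    (α β : ℂ) (hα : ‖α‖ < 1) (hβ : ‖β‖ < 1)
    (R : ℝ) (hR : 1 < R) :
    ∀ z : ℂ, 1 ≤ ‖z‖ →
      ‖P.eval ((R : ℂ) * z) - α * P.eval z
          + β * ((((R : ℂ) + 1) / 2) ^ n - ((‖α‖ : ℝ) : ℂ)) * P.eval z‖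
        ≤ ‖(R : ℂ) ^ n - α
            + β * ((((R : ℂ) + 1) / 2) ^ n - ((‖α‖ : ℝ) : ℂ))‖
          * ‖z‖ ^ n * maxMod P := by
  intro z hz
  have hR1 : (1:ℝ) ≤ R := hR.le
  have hP0 : P ≠ 0 := fun h => by simp [h] at hdeg; omega
  set M := maxMod P with hMdef
  have hM : 0 < M := maxMod_pos P hP0
  set s : ℝ := ((R+1)/2)^n with hsdef
  have hs1 : (1:ℝ) ≤ s := one_le_pow₀ (by linarith)
  have hsR : s < R^n := by
    apply pow_lt_pow_left₀ (by linarith) (by linarith) (by omega)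
  set c : ℝ := s - ‖α‖ with hcdef
  have hc : 0 < c := by have := hα; simp only [hcdef]; linarith
  -- the complex constant
  have hcc : (((R:ℂ) + 1)/2)^n - ((‖α‖ : ℝ) : ℂ) = ((c : ℝ) : ℂ) := by
    rw [hcdef, hsdef]
    push_cast
    ring
  rw [hcc]
  set cc : ℂ := ((c:ℝ):ℂ) with hccdef
  have habs_cc : ‖cc‖ = c := by
    rw [hccdef, Complex.norm_real, Real.norm_eq_abs, abs_of_pos hc]
  set A : ℂ := (R:ℂ)^n - α + β * cc with hAdef
  have habsRn : ‖(R:ℂ)^n‖ = R^n := by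
    rw [norm_pow, Complex.norm_real, Real.norm_eq_abs, abs_of_pos (by linarith)]
  have hsmall : ‖α - β * cc‖ < s := by
    calc ‖α - β * cc‖ ≤ ‖α‖ + ‖β‖ * c := by
          refine (norm_sub_le _ _).trans ?_
          rw [norm_mul, habs_cc]
      _ < ‖α‖ + 1 * c := by
          have := mul_lt_mul_of_pos_right hβ hc
          linarith
      _ = s := by rw [hcdef]; ring
  have hA : 0 < ‖A‖ := by
    have h1 : A = (R:ℂ)^n - (α - β * cc) := by rw [hAdef]; ring
    have h2 : ‖(R:ℂ)^n‖ - ‖α - β * cc‖ ≤ ‖A‖ := by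
      rw [h1]; exact (norm_sub_norm_le _ _)
    rw [habsRn] at h2
    linarith
  have hzn : (0:ℝ) < ‖z‖ ^ n := by positivity
  have hz0 : z ≠ 0 := fun h => by simp [h] at hz; linarith
  by_contra hcon
  push_neg at hcon
  set T : ℂ := P.eval ((R:ℂ)*z) - α * P.eval z + β * cc * P.eval z with hTdef
  have hMAzn : (M:ℂ) * A * z^n ≠ 0 := by
    apply mul_ne_zero (mul_ne_zero ?_ ?_) (pow_ne_zero _ hz0)
    · exact_mod_cast hM.ne'
    · exact norm_ne_zero_iff.mp hA.ne'
  set lam : ℂ := T / ((M:ℂ) * A * z^n) with hlamdef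
  have hlam_eq : lam * ((M:ℂ) * A * z^n) = T := div_mul_cancel₀ _ hMAzn
  have habs_zn : ‖z^n‖ = ‖z‖ ^ n := norm_pow _ _
  have hlam : 1 < ‖lam‖ := by
    rw [hlamdef, norm_div, norm_mul, norm_mul, habs_zn, Complex.norm_real, Real.norm_eq_abs,
      abs_of_pos hM]
    rw [lt_div_iff₀ (by positivity), one_mul]
    calc M * ‖A‖ * ‖z‖ ^ n
        = ‖A‖ * ‖z‖ ^ n * M := by ring
      _ < ‖T‖ := hcon
  set F : Polynomial ℂ := P - Polynomial.C (lam * M) * Polynomial.X^n with hFdef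
  have hFeval : ∀ w : ℂ, F.eval w = P.eval w - lam * M * w^n := by
    intro w; simp [hFdef]
  have hFne : ∀ w : ℂ, 1 ≤ ‖w‖ → F.eval w ≠ 0 := by
    intro w hw heq
    rw [hFeval w, sub_eq_zero] at heq
    have h1 : ‖P.eval w‖ = ‖lam‖ * M * ‖w‖ ^ n := by
      rw [heq, norm_mul, norm_mul, norm_pow, Complex.norm_real, Real.norm_eq_abs, abs_of_pos hM]
    have h2 := growth P w hw
    rw [hdeg] at h2
    rw [← hMdef] at h2
    have hwn : (0:ℝ) < ‖w‖ ^ n := by positivity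
    nlinarith [mul_lt_mul_of_pos_right (mul_lt_mul_of_pos_right hlam hM) hwn]
  have hF0 : F ≠ 0 := by
    intro h
    exact hFne 2 (by simp) (by rw [h]; simp)
  have hcoeffn : F.coeff n = P.coeff n - lam * M := by
    simp [hFdef, mul_assoc, Polynomial.coeff_C_mul, Polynomial.coeff_X_pow]
  have hPcoeff : ‖P.coeff n‖ ≤ M := by
    have := leadingCoeff_le P
    rwa [Polynomial.leadingCoeff, hdeg] at this
  have hcoeff_ne : F.coeff n ≠ 0 := by
    intro h
    rw [hcoeffn, sub_eq_zero] at h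
    have : ‖P.coeff n‖ = ‖lam‖ * M := by
      rw [h, norm_mul, Complex.norm_real, Real.norm_eq_abs, abs_of_pos hM]
    nlinarith
  have hFdeg : F.natDegree = n := by
    apply Polynomial.natDegree_eq_of_le_of_coeff_ne_zero ?_ hcoeff_ne
    refine (Polynomial.natDegree_sub_le _ _).trans ?_
    simp only [hdeg]
    apply max_le le_rfl
    exact (Polynomial.natDegree_C_mul_le _ _).trans (by simp)
  have hroots : ∀ r ∈ F.roots, ‖r‖ ≤ 1 := by
    intro r hr
    by_contra hr1
    push_neg at hr1
    exact hFne r hr1.le ((Polynomial.mem_roots hF0).mp hr)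
  have key := eval_growth F hF0 hroots R hR1 z hz
  rw [hFdeg] at key
  have hFz := hFne z hz
  have hFz_pos : 0 < ‖F.eval z‖ := norm_pos_iff.mpr hFz
  -- T(F)(z) = 0
  have hTF : F.eval ((R:ℂ)*z) - α * F.eval z + β * cc * F.eval z = 0 := by
    have e : F.eval ((R:ℂ)*z) - α * F.eval z + β * cc * F.eval z
        = T - lam * ((M:ℂ) * A * z^n) := by
      rw [hFeval, hFeval, hTdef, hAdef]
      ring
    rw [e, hlam_eq, sub_self]
  -- lower bound
  have hlb : ‖F.eval ((R:ℂ)*z)‖ - s * ‖F.eval z‖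
      < ‖F.eval ((R:ℂ)*z) - α * F.eval z + β * cc * F.eval z‖ := by
    have e : F.eval ((R:ℂ)*z) - α * F.eval z + β * cc * F.eval z
        = F.eval ((R:ℂ)*z) - (α - β * cc) * F.eval z := by ring
    rw [e]
    have h1 : ‖F.eval ((R:ℂ)*z)‖ - ‖(α - β*cc) * F.eval z‖
        ≤ ‖F.eval ((R:ℂ)*z) - (α - β * cc) * F.eval z‖ :=
      norm_sub_norm_le _ _
    have h2 : ‖(α - β*cc) * F.eval z‖ < s * ‖F.eval z‖ := by
      rw [norm_mul]
      exact mul_lt_mul_of_pos_right hsmall hFz_pos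
    linarith
  rw [hTF] at hlb
  simp only [norm_zero] at hlb
  linarith

/-- Theorem A (Aziz–Rather), first part. -/
theorem thmA_first (P : Polynomial ℂ) (n : ℕ) (hn : 1 ≤ n) (hdeg : P.natDegree = n)
    (α β : ℂ) (hα : ‖α‖ ≤ 1) (hβ : ‖β‖ ≤ 1)
    (R : ℝ) (hR : 1 ≤ R) :
    ∀ z : ℂ, 1 ≤ ‖z‖ →
      ‖P.eval ((R : ℂ) * z) - α * P.eval z
          + β * ((((R : ℂ) + 1) / 2) ^ n - ((‖α‖ : ℝ) : ℂ)) * P.eval z‖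
        ≤ ‖(R : ℂ) ^ n - α
            + β * ((((R : ℂ) + 1) / 2) ^ n - ((‖α‖ : ℝ) : ℂ))‖
          * ‖z‖ ^ n * maxMod P := by
  intro z hz
  rcases eq_or_lt_of_le hR with hR1 | hR1
  · -- R = 1
    subst hR1
    have hgrowth := growth P z hz
    rw [hdeg] at hgrowth
    rw [show ((1:ℝ):ℂ) = 1 by norm_num, one_mul, show ((1:ℂ)+1)/2 = 1 by norm_num,
      one_pow]
    calc ‖P.eval z - α * P.eval z + β * (1 - ((‖α‖ : ℝ) : ℂ)) * P.eval z‖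
        = ‖1 - α + β * (1 - ((‖α‖ : ℝ) : ℂ))‖ * ‖P.eval z‖ := by
          rw [← norm_mul]; congr 1; ring
      _ ≤ ‖1 - α + β * (1 - ((‖α‖ : ℝ) : ℂ))‖
            * (‖z‖ ^ n * maxMod P) :=
          mul_le_mul_of_nonneg_left hgrowth (norm_nonneg _)
      _ = _ := by rw [← mul_assoc]
  · -- R > 1 : continuity in (α, β)
    set f : ℝ → ℂ := fun t => P.eval ((R:ℂ)*z) - (t:ℂ)*α*P.eval z
      + (t:ℂ)*β*((((R:ℂ)+1)/2)^n - (t:ℂ)*((‖α‖ : ℝ):ℂ))*P.eval z with hf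
    set g : ℝ → ℂ := fun t => (R:ℂ)^n - (t:ℂ)*α
      + (t:ℂ)*β*((((R:ℂ)+1)/2)^n - (t:ℂ)*((‖α‖ : ℝ):ℂ)) with hg
    have hcf : Continuous f := by fun_prop
    have hcg : Continuous g := by fun_prop
    have key : ∀ t ∈ Set.Ico (0:ℝ) 1,
        ‖f t‖ ≤ ‖g t‖ * ‖z‖ ^ n * maxMod P := by
      intro t ⟨ht0, ht1⟩
      have hα' : ‖(t:ℂ)*α‖ < 1 := by
        rw [norm_mul, Complex.norm_real, Real.norm_eq_abs, abs_of_nonneg ht0]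
        calc t * ‖α‖ ≤ t * 1 := by
              exact mul_le_mul_of_nonneg_left hα ht0
          _ < 1 := by linarith
      have hβ' : ‖(t:ℂ)*β‖ < 1 := by
        rw [norm_mul, Complex.norm_real, Real.norm_eq_abs, abs_of_nonneg ht0]
        calc t * ‖β‖ ≤ t * 1 := mul_le_mul_of_nonneg_left hβ ht0
          _ < 1 := by linarith
      have h := core P n hn hdeg ((t:ℂ)*α) ((t:ℂ)*β) hα' hβ' R hR1 z hz
      have habs : ((‖(t:ℂ)*α‖ : ℝ) : ℂ) = (t:ℂ)*((‖α‖ : ℝ):ℂ) := by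
        rw [norm_mul, Complex.norm_real, Real.norm_eq_abs, abs_of_nonneg ht0]
        push_cast; ring
      rw [habs] at h
      simpa only [hf, hg] using h
    have hne : (nhdsWithin (1:ℝ) (Set.Ico (0:ℝ) 1)).NeBot := by
      apply mem_closure_iff_nhdsWithin_neBot.mp
      rw [closure_Ico (by norm_num : (0:ℝ) ≠ 1)]
      exact ⟨by norm_num, le_rfl⟩
    have hL : Filter.Tendsto (fun t => ‖f t‖) (nhdsWithin 1 (Set.Ico (0:ℝ) 1))
        (nhds (‖f 1‖)) :=
      ((continuous_norm.comp hcf).continuousAt).continuousWithinAt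
    have hG : Filter.Tendsto (fun t => ‖g t‖ * ‖z‖ ^ n * maxMod P)
        (nhdsWithin 1 (Set.Ico (0:ℝ) 1))
        (nhds (‖g 1‖ * ‖z‖ ^ n * maxMod P)) :=
      (((continuous_norm.comp hcg).mul continuous_const).mul
        continuous_const).continuousAt.continuousWithinAt
    have hfin : ‖f 1‖ ≤ ‖g 1‖ * ‖z‖ ^ n * maxMod P :=
      le_of_tendsto_of_tendsto hL hG (eventually_mem_nhdsWithin.mono key)
    have ef : f 1 = P.eval ((R : ℂ) * z) - α * P.eval z
        + β * ((((R : ℂ) + 1) / 2) ^ n - ((‖α‖ : ℝ) : ℂ)) * P.eval z := by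
      simp [hf]
    have eg : g 1 = (R : ℂ) ^ n - α
        + β * ((((R : ℂ) + 1) / 2) ^ n - ((‖α‖ : ℝ) : ℂ)) := by
      simp [hg]
    rwa [ef, eg] at hfin
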